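/- arXiv:1202.6558 — 5 statements merged into one kernel-verified Lean document; each statement's English description precedes it below -/
import Mathlib

section
/- Let 0 < α < 1/2 < β < 1 with α + β > 1, let T > 0 and 0 ≤ a < b ≤ T, and let f, g : [0,T] → ℝ be β-Hölder continuous. Then | ∫_a^b (D_{a+}^α f)(t) · (D̃_{b−}^{1−α} g)(t) dt | ≤ k_{α,β} · ‖g‖_{0,T,β} · ( ‖f‖_{a,b,∞} (b−a)^β + ‖f‖_{a,b,β} (b−a)^{2β} ), where k_{α,β} := β·B(α+β, 1−α) / ((α+β−1)·Γ(α)·Γ(1−α)) + α·β·B(α+β, 1+β−α) / ((α+β−1)·(β−α)·Γ(α)·Γ(1−α)), with Γ the Gamma function and B the Beta function. (This is the estimate of Lemma 4.1: up to a sign, the integral above is Zähle's representation of the Young integral ∫_a^b f dg.) -/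
open MeasureTheory intervalIntegral

/-- The uniform norm of `f` on `[a,b]`: `‖f‖_{a,b,∞} = sup_{a ≤ r ≤ b} |f r|`. -/
noncomputable def supNorm (f : ℝ → ℝ) (a b : ℝ) : ℝ :=
  sSup ((fun r => |f r|) '' Set.Icc a b)

/-- The set of Hölder ratios of `f` on `[a,b]` with exponent `β`. -/
def holderSet (f : ℝ → ℝ) (a b β : ℝ) : Set ℝ :=
  {c | ∃ r s : ℝ, a ≤ r ∧ r < s ∧ s ≤ b ∧ c = |f s - f r| / (s - r) ^ β}

/-- The `β`-Hölder seminorm of `f` on `[a,b]`: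
`‖f‖_{a,b,β} = sup_{a ≤ r < s ≤ b} |f s - f r| / (s - r)^β`. -/
noncomputable def holderNorm (f : ℝ → ℝ) (a b β : ℝ) : ℝ :=
  sSup (holderSet f a b β)

/-- Left-sided fractional derivative
`D_{a+}^α f (t) = (1/Γ(1-α)) (f t (t-a)^{-α} + α ∫_a^t (f t - f s)(t-s)^{-α-1} ds)`. -/
noncomputable def Dplus (f : ℝ → ℝ) (a α t : ℝ) : ℝ :=
  (1 / Real.Gamma (1 - α)) *
    (f t * (t - a) ^ (-α) + α * ∫ s in a..t, (f t - f s) * (t - s) ^ (-α - 1))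

/-- Sign-normalized right-sided fractional derivative of order `1-α`:
`D̃_{b-}^{1-α} g (t) = (1/Γ(α)) ((g t - g b)(b-t)^{α-1} + (1-α) ∫_t^b (g t - g s)(s-t)^{α-2} ds)`. -/
noncomputable def Dminus (g : ℝ → ℝ) (b α t : ℝ) : ℝ :=
  (1 / Real.Gamma α) *
    ((g t - g b) * (b - t) ^ (α - 1) + (1 - α) * ∫ s in t..b, (g t - g s) * (s - t) ^ (α - 2))

/-- The Beta function `B(x,y) = Γ(x)Γ(y)/Γ(x+y)`. -/
noncomputable def betaFn (x y : ℝ) : ℝ :=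
  Real.Gamma x * Real.Gamma y / Real.Gamma (x + y)

/-- The constant `k_{α,β}` of Lemma 4.1. -/
noncomputable def kConst (α β : ℝ) : ℝ :=
  β * betaFn (α + β) (1 - α) / ((α + β - 1) * Real.Gamma α * Real.Gamma (1 - α)) +
    α * β * betaFn (α + β) (1 + β - α) /
      ((α + β - 1) * (β - α) * Real.Gamma α * Real.Gamma (1 - α))


lemma betaFn_symm (x y : ℝ) : betaFn x y = betaFn y x := by
  rw [betaFn, betaFn, add_comm, mul_comm]

lemma betaFn_nonneg {x y : ℝ} (hx : 0 < x) (hy : 0 < y) : 0 ≤ betaFn x y := by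
  have h1 := Real.Gamma_pos_of_pos hx
  have h2 := Real.Gamma_pos_of_pos hy
  have h3 := Real.Gamma_pos_of_pos (add_pos hx hy)
  unfold betaFn; positivity

lemma integral_beta_scaled {u v c : ℝ} (hu : 0 < u) (hv : 0 < v) (hc : 0 < c) :
    ∫ x in (0:ℝ)..c, x ^ (u - 1) * (c - x) ^ (v - 1) = c ^ (u + v - 1) * betaFn u v := by
  have hG : (0:ℝ) < Real.Gamma (u + v) := Real.Gamma_pos_of_pos (add_pos hu hv)
  have hB : Complex.betaIntegral u v = ((betaFn u v : ℝ) : ℂ) := by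
    have h4 := Complex.Gamma_mul_Gamma_eq_betaIntegral (s := (u:ℂ)) (t := (v:ℂ))
      (by simpa using hu) (by simpa using hv)
    rw [← Complex.ofReal_add, Complex.Gamma_ofReal, Complex.Gamma_ofReal,
      Complex.Gamma_ofReal] at h4
    rw [betaFn, Complex.ofReal_div, Complex.ofReal_mul, h4]
    rw [mul_comm, mul_div_assoc, div_self (by exact_mod_cast hG.ne'), mul_one]
  have h3 := Complex.betaIntegral_scaled (u:ℂ) (v:ℂ) hc
  have h2 : (∫ x in (0:ℝ)..c, ((x ^ (u - 1) * (c - x) ^ (v - 1) : ℝ) : ℂ))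
      = ∫ x in (0:ℝ)..c, (x:ℂ) ^ ((u:ℂ) - 1) * ((c:ℂ) - (x:ℂ)) ^ ((v:ℂ) - 1) := by
    apply intervalIntegral.integral_congr
    intro x hx
    rw [Set.uIcc_of_le hc.le] at hx
    show ((x ^ (u - 1) * (c - x) ^ (v - 1) : ℝ) : ℂ) = _
    rw [Complex.ofReal_mul, Complex.ofReal_cpow hx.1, Complex.ofReal_cpow (by linarith [hx.2])]
    push_cast
    ring
  rw [intervalIntegral.integral_ofReal] at h2
  rw [← h2, hB, show ((u:ℂ) + v - 1) = ((u + v - 1 : ℝ) : ℂ) by push_cast; ring, ← Complex.ofReal_cpow hc.le, ← Complex.ofReal_mul] at h3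
  exact_mod_cast h3


lemma holder_bound {f : ℝ → ℝ} {A B β : ℝ} (hβ : 0 < β) (hB : BddAbove (holderSet f A B β))
    {r s : ℝ} (hr : A ≤ r) (hrs : r ≤ s) (hs : s ≤ B) :
    |f s - f r| ≤ holderNorm f A B β * (s - r) ^ β := by
  rcases eq_or_lt_of_le hrs with rfl | h
  · simp [Real.zero_rpow hβ.ne']
  · have hmem : |f s - f r| / (s - r) ^ β ∈ holderSet f A B β := ⟨r, s, hr, h, hs, rfl⟩
    have hle := le_csSup hB hmem
    have hpow : 0 < (s - r) ^ β := Real.rpow_pos_of_pos (by linarith) β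
    calc |f s - f r| = |f s - f r| / (s - r) ^ β * (s - r) ^ β := by field_simp
    _ ≤ holderNorm f A B β * (s - r) ^ β := mul_le_mul_of_nonneg_right hle hpow.le

lemma holderNorm_nonneg {f : ℝ → ℝ} {A B β : ℝ} (hB : BddAbove (holderSet f A B β))
    (hAB : A < B) : 0 ≤ holderNorm f A B β := by
  refine le_trans ?_ (le_csSup hB (⟨A, B, le_refl _, hAB, le_refl _, rfl⟩ :
    |f B - f A| / (B - A) ^ β ∈ holderSet f A B β))
  have hpos := sub_pos.mpr hAB; positivity

lemma holderSet_mono {f : ℝ → ℝ} {A B A' B' β : ℝ} (hA : A' ≤ A) (hB : B ≤ B') :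
    holderSet f A B β ⊆ holderSet f A' B' β := by
  rintro c ⟨r, s, h1, h2, h3, rfl⟩
  exact ⟨r, s, le_trans hA h1, h2, le_trans h3 hB, rfl⟩

lemma continuousOn_of_holder {f : ℝ → ℝ} {A B β : ℝ} (hβ0 : 0 < β)
    (hB : BddAbove (holderSet f A B β)) (hAB : A < B) :
    ContinuousOn f (Set.Icc A B) := by
  set K := holderNorm f A B β + 1 with hK
  have hKpos : 0 < K := by have := holderNorm_nonneg hB hAB; linarith
  have key : ∀ x ∈ Set.Icc A B, ∀ y ∈ Set.Icc A B, |f y - f x| ≤ K * |y - x| ^ β := by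
    intro x hx y hy
    rcases le_total x y with h | h
    · refine le_trans (holder_bound hβ0 hB hx.1 h hy.2) ?_
      rw [abs_of_nonneg (by linarith)]
      have := Real.rpow_nonneg (show (0:ℝ) ≤ y - x by linarith) β
      nlinarith [holderNorm_nonneg hB hAB]
    · rw [abs_sub_comm, abs_sub_comm y x]
      refine le_trans (holder_bound hβ0 hB hy.1 h hx.2) ?_
      rw [abs_of_nonneg (by linarith)]
      have := Real.rpow_nonneg (show (0:ℝ) ≤ x - y by linarith) β
      nlinarith [holderNorm_nonneg hB hAB]
  rw [Metric.continuousOn_iff]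
  intro x hx ε hε
  refine ⟨(ε / (2 * K)) ^ (1 / β), Real.rpow_pos_of_pos (by positivity) _, fun y hy hd => ?_⟩
  have h1 : |f y - f x| ≤ K * |y - x| ^ β := key x hx y hy
  have h2 : |y - x| ^ β ≤ ((ε / (2 * K)) ^ (1 / β)) ^ β :=
    Real.rpow_le_rpow (abs_nonneg _) (le_of_lt (by simpa [Real.dist_eq] using hd)) hβ0.le
  rw [← Real.rpow_mul (by positivity), one_div, inv_mul_cancel₀ hβ0.ne', Real.rpow_one] at h2
  have : |f y - f x| ≤ K * (ε / (2 * K)) := le_trans h1 (by nlinarith)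
  rw [Real.dist_eq]
  calc |f y - f x| ≤ K * (ε / (2 * K)) := this
  _ = ε / 2 := by field_simp
  _ < ε := by linarith

lemma le_supNorm {f : ℝ → ℝ} {a b : ℝ} (hcont : ContinuousOn f (Set.Icc a b))
    {t : ℝ} (ht : t ∈ Set.Icc a b) : |f t| ≤ supNorm f a b :=
  le_csSup ((isCompact_Icc.image_of_continuousOn hcont.abs).bddAbove)
    (Set.mem_image_of_mem _ ht)

lemma supNorm_nonneg {f : ℝ → ℝ} {a b : ℝ} (hcont : ContinuousOn f (Set.Icc a b))
    (hab : a ≤ b) : 0 ≤ supNorm f a b :=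
  le_trans (abs_nonneg (f a)) (le_supNorm hcont ⟨le_refl a, hab⟩)


/-- Bound for `|∫ s in c..d, F s|` by `∫ s in c..d, G s` when `|F| ≤ G` on `Ioo c d`
and `G` is interval integrable. -/
lemma abs_intervalIntegral_le {F G : ℝ → ℝ} {c d : ℝ} (hcd : c ≤ d)
    (hG : IntervalIntegrable G volume c d)
    (hFG : ∀ s ∈ Set.Ioo c d, |F s| ≤ G s) :
    |∫ s in c..d, F s| ≤ ∫ s in c..d, G s := by
  have h0 := intervalIntegral.norm_integral_le_integral_norm (f := F) (a := c) (b := d)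
    (μ := volume) hcd
  simp only [Real.norm_eq_abs] at h0
  refine le_trans h0 ?_
  rw [intervalIntegral.integral_of_le hcd, intervalIntegral.integral_of_le hcd,
    MeasureTheory.integral_Ioc_eq_integral_Ioo, MeasureTheory.integral_Ioc_eq_integral_Ioo]
  apply MeasureTheory.integral_mono_of_nonneg
  · filter_upwards with s using abs_nonneg _
  · exact ((intervalIntegrable_iff_integrableOn_Ioo_of_le hcd).mp hG)
  · rw [Filter.EventuallyLE, ae_restrict_iff' measurableSet_Ioo]
    filter_upwards with s hs
    simpa using hFG s hs

lemma integral_rpow_sub_left {c d p : ℝ} (hp : -1 < p) (hcd : c ≤ d) :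
    ∫ s in c..d, (d - s) ^ p = (d - c) ^ (p + 1) / (p + 1) := by
  have h := intervalIntegral.integral_comp_sub_left (a := c) (b := d)
    (fun x : ℝ => x ^ p) d
  simp only [sub_self] at h
  rw [h, integral_rpow (Or.inl hp), Real.zero_rpow (by linarith : p + 1 ≠ 0), sub_zero]

lemma integral_rpow_sub_right {c d p : ℝ} (hp : -1 < p) (hcd : c ≤ d) :
    ∫ s in c..d, (s - c) ^ p = (d - c) ^ (p + 1) / (p + 1) := by
  have h := intervalIntegral.integral_comp_sub_right (a := c) (b := d)
    (fun x : ℝ => x ^ p) c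
  simp only [sub_self] at h
  rw [h, integral_rpow (Or.inl hp), Real.zero_rpow (by linarith : p + 1 ≠ 0), sub_zero]

lemma intervalIntegrable_rpow_sub_left {c d p : ℝ} (hp : -1 < p) :
    IntervalIntegrable (fun s => (d - s) ^ p) volume c d := by
  have h := (intervalIntegrable_rpow' (a := d - d) (b := d - c) hp).comp_sub_left d
  simpa using h.symm

lemma intervalIntegrable_rpow_sub_right {c d p : ℝ} (hp : -1 < p) :
    IntervalIntegrable (fun s => (s - c) ^ p) volume c d := by
  have h := (intervalIntegrable_rpow' (a := c - c) (b := d - c) hp).comp_sub_right c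
  simpa using h

lemma Dplus_bound {f : ℝ → ℝ} {a b α β Kf Mf : ℝ}
    (hα0 : 0 < α) (hα1 : α < 1) (hβα : α < β)
    (hKf : ∀ r s, a ≤ r → r ≤ s → s ≤ b → |f s - f r| ≤ Kf * (s - r) ^ β)
    (hMf : ∀ t ∈ Set.Icc a b, |f t| ≤ Mf)
    {t : ℝ} (ht : t ∈ Set.Ioc a b) :
    |Dplus f a α t| ≤ (1 / Real.Gamma (1 - α)) *
      (Mf * (t - a) ^ (-α) + α * (Kf * ((t - a) ^ (β - α) / (β - α)))) := by
  have hΓ : 0 < Real.Gamma (1 - α) := Real.Gamma_pos_of_pos (by linarith)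
  have hta : 0 < t - a := by linarith [ht.1]
  have hKf0 : 0 ≤ Kf := by
    have := hKf a t (le_refl a) (by linarith) ht.2
    nlinarith [abs_nonneg (f t - f a), Real.rpow_pos_of_pos hta β]
  rw [Dplus, abs_mul, abs_of_nonneg (by positivity : (0:ℝ) ≤ 1 / Real.Gamma (1 - α))]
  apply mul_le_mul_of_nonneg_left _ (by positivity)
  refine le_trans (abs_add_le _ _) (add_le_add ?_ ?_)
  · rw [abs_mul, abs_of_nonneg (Real.rpow_nonneg hta.le _)]
    exact mul_le_mul_of_nonneg_right (hMf t ⟨ht.1.le, ht.2⟩) (Real.rpow_nonneg hta.le _)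
  · rw [abs_mul, abs_of_nonneg hα0.le]
    apply mul_le_mul_of_nonneg_left _ hα0.le
    have key : |∫ s in a..t, (f t - f s) * (t - s) ^ (-α - 1)| ≤
        ∫ s in a..t, Kf * (t - s) ^ (β - α - 1) := by
      apply abs_intervalIntegral_le ht.1.le
      · exact (intervalIntegrable_rpow_sub_left (by linarith)).const_mul Kf
      · intro s hs
        have hts : 0 < t - s := by linarith [hs.2]
        rw [abs_mul, abs_of_nonneg (Real.rpow_nonneg hts.le _)]
        calc |f t - f s| * (t - s) ^ (-α - 1)
            ≤ Kf * (t - s) ^ β * (t - s) ^ (-α - 1) :=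
              mul_le_mul_of_nonneg_right
                (hKf s t (by linarith [hs.1]) (by linarith [hs.2] : s ≤ t) ht.2)
                (Real.rpow_nonneg hts.le _)
          _ = Kf * (t - s) ^ (β - α - 1) := by
              rw [mul_assoc, ← Real.rpow_add hts]; ring_nf
    refine le_trans key ?_
    rw [intervalIntegral.integral_const_mul, integral_rpow_sub_left (by linarith) ht.1.le]
    have : β - α - 1 + 1 = β - α := by ring
    rw [this]

lemma Dminus_bound {g : ℝ → ℝ} {a b α β Kg : ℝ}
    (hα0 : 0 < α) (hα1 : α < 1) (hβ1 : β < 1) (hαβ : 1 < α + β)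
    (hKg : ∀ r s, a ≤ r → r ≤ s → s ≤ b → |g s - g r| ≤ Kg * (s - r) ^ β)
    {t : ℝ} (ht : t ∈ Set.Ico a b) :
    |Dminus g b α t| ≤ (1 / Real.Gamma α) *
      (Kg * (b - t) ^ (α + β - 1) +
        (1 - α) * (Kg * ((b - t) ^ (α + β - 1) / (α + β - 1)))) := by
  have hΓ : 0 < Real.Gamma α := Real.Gamma_pos_of_pos hα0
  have hbt : 0 < b - t := by linarith [ht.2]
  have hKg0 : 0 ≤ Kg := by
    have := hKg t b ht.1 (by linarith) (le_refl b)
    nlinarith [abs_nonneg (g b - g t), Real.rpow_pos_of_pos hbt β]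
  rw [Dminus, abs_mul, abs_of_nonneg (by positivity : (0:ℝ) ≤ 1 / Real.Gamma α)]
  apply mul_le_mul_of_nonneg_left _ (by positivity)
  refine le_trans (abs_add_le _ _) (add_le_add ?_ ?_)
  · rw [abs_mul, abs_of_nonneg (Real.rpow_nonneg hbt.le _), abs_sub_comm]
    calc |g b - g t| * (b - t) ^ (α - 1)
        ≤ Kg * (b - t) ^ β * (b - t) ^ (α - 1) :=
          mul_le_mul_of_nonneg_right (hKg t b ht.1 (by linarith [ht.2] : t ≤ b) (le_refl b))
            (Real.rpow_nonneg hbt.le _)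
      _ = Kg * (b - t) ^ (α + β - 1) := by
          rw [mul_assoc, ← Real.rpow_add hbt]; ring_nf
  · rw [abs_mul, abs_of_nonneg (by linarith : (0:ℝ) ≤ 1 - α)]
    apply mul_le_mul_of_nonneg_left _ (by linarith)
    have key : |∫ s in t..b, (g t - g s) * (s - t) ^ (α - 2)| ≤
        ∫ s in t..b, Kg * (s - t) ^ (α + β - 2) := by
      apply abs_intervalIntegral_le (by linarith [ht.2] : t ≤ b)
      · exact (intervalIntegrable_rpow_sub_right (by linarith)).const_mul Kg
      · intro s hs
        have hst : 0 < s - t := by linarith [hs.1]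
        rw [abs_mul, abs_of_nonneg (Real.rpow_nonneg hst.le _), abs_sub_comm]
        calc |g s - g t| * (s - t) ^ (α - 2)
            ≤ Kg * (s - t) ^ β * (s - t) ^ (α - 2) :=
              mul_le_mul_of_nonneg_right
                (hKg t s ht.1 (by linarith [hs.1] : t ≤ s) (by linarith [hs.2]))
                (Real.rpow_nonneg hst.le _)
          _ = Kg * (s - t) ^ (α + β - 2) := by
              rw [mul_assoc, ← Real.rpow_add hst]; ring_nf
    refine le_trans key ?_
    rw [intervalIntegral.integral_const_mul, integral_rpow_sub_right (by linarith) (by linarith [ht.2] : t ≤ b)]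
    have : α + β - 2 + 1 = α + β - 1 := by ring
    rw [this]


lemma integral_beta_shift {u v a b : ℝ} (hu : 0 < u) (hv : 0 < v) (hab : a < b) :
    ∫ t in a..b, (t - a) ^ (u - 1) * (b - t) ^ (v - 1)
      = (b - a) ^ (u + v - 1) * betaFn u v := by
  calc ∫ t in a..b, (t - a) ^ (u - 1) * (b - t) ^ (v - 1)
      = ∫ t in a..b, (fun x : ℝ => x ^ (u - 1) * (b - a - x) ^ (v - 1)) (t - a) := by
        apply intervalIntegral.integral_congr
        intro t _
        simp only
        rw [show b - a - (t - a) = b - t by ring]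
    _ = ∫ x in (a - a)..(b - a), x ^ (u - 1) * (b - a - x) ^ (v - 1) := by
        exact intervalIntegral.integral_comp_sub_right
          (fun x : ℝ => x ^ (u - 1) * (b - a - x) ^ (v - 1)) a
    _ = ∫ x in (0:ℝ)..(b - a), x ^ (u - 1) * (b - a - x) ^ (v - 1) := by rw [sub_self]
    _ = (b - a) ^ (u + v - 1) * betaFn u v := integral_beta_scaled hu hv (by linarith)

set_option maxHeartbeats 2000000 in
/-- Lemma 4.1 (estimate of Young's integral in Zähle's fractional representation). -/
theorem young_integral_estimate (α β T a b : ℝ) (f g : ℝ → ℝ)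
    (hα0 : 0 < α) (hα : α < 1 / 2) (hβ1 : 1 / 2 < β) (hβ : β < 1) (hαβ : 1 < α + β)
    (hT : 0 < T) (ha : 0 ≤ a) (hab : a < b) (hbT : b ≤ T)
    (hf : BddAbove (holderSet f 0 T β)) (hg : BddAbove (holderSet g 0 T β)) :
    |∫ t in a..b, Dplus f a α t * Dminus g b α t| ≤
      kConst α β * holderNorm g 0 T β *
        (supNorm f a b * (b - a) ^ β + holderNorm f a b β * (b - a) ^ (2 * β)) := by
  have hβ0 : 0 < β := by linarith
  have hβα : α < β := by linarith
  have h0T : (0:ℝ) < T := hT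
  have hfab : BddAbove (holderSet f a b β) := hf.mono (holderSet_mono ha hbT)
  set Kg := holderNorm g 0 T β with hKgdef
  set Kf := holderNorm f a b β with hKfdef
  set Mf := supNorm f a b with hMfdef
  have hKf : ∀ r s, a ≤ r → r ≤ s → s ≤ b → |f s - f r| ≤ Kf * (s - r) ^ β :=
    fun r s h1 h2 h3 => holder_bound hβ0 hfab h1 h2 h3
  have hKg : ∀ r s, a ≤ r → r ≤ s → s ≤ b → |g s - g r| ≤ Kg * (s - r) ^ β :=
    fun r s h1 h2 h3 => holder_bound hβ0 hg (le_trans ha h1) h2 (le_trans h3 hbT)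
  have hcont : ContinuousOn f (Set.Icc a b) := continuousOn_of_holder hβ0 hfab hab
  have hMf : ∀ t ∈ Set.Icc a b, |f t| ≤ Mf := fun t ht => le_supNorm hcont ht
  have hKf0 : 0 ≤ Kf := holderNorm_nonneg hfab hab
  have hKg0 : 0 ≤ Kg := holderNorm_nonneg hg h0T
  have hMf0 : 0 ≤ Mf := supNorm_nonneg hcont hab.le
  have hΓ1 : 0 < Real.Gamma (1 - α) := Real.Gamma_pos_of_pos (by linarith)
  have hΓ2 : 0 < Real.Gamma α := Real.Gamma_pos_of_pos hα0
  set C1 := Mf * Kg * β / ((α + β - 1) * Real.Gamma α * Real.Gamma (1 - α)) with hC1def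
  set C2 := α * Kf * Kg * β /
      ((β - α) * (α + β - 1) * Real.Gamma α * Real.Gamma (1 - α)) with hC2def
  have hden : 0 < (α + β - 1) * Real.Gamma α * Real.Gamma (1 - α) :=
    mul_pos (mul_pos (by linarith) hΓ2) hΓ1
  have hC10 : 0 ≤ C1 := by
    rw [hC1def]
    exact div_nonneg (mul_nonneg (mul_nonneg hMf0 hKg0) hβ0.le) hden.le
  have hC20 : 0 ≤ C2 := by
    rw [hC2def]
    refine div_nonneg (mul_nonneg (mul_nonneg (mul_nonneg hα0.le hKf0) hKg0) hβ0.le) ?_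
    have : (0:ℝ) < (β - α) * (α + β - 1) * Real.Gamma α * Real.Gamma (1 - α) :=
      mul_pos (mul_pos (mul_pos (by linarith) (by linarith)) hΓ2) hΓ1
    exact this.le
  -- integrability of the bounding function
  have cont2 : ContinuousOn (fun t : ℝ => (b - t) ^ (α + β - 1)) (Set.uIcc a b) :=
    ContinuousOn.rpow_const ((continuous_const.sub continuous_id).continuousOn)
      (fun x _ => Or.inr (by linarith))
  have cont1 : ContinuousOn (fun t : ℝ => (t - a) ^ (β - α)) (Set.uIcc a b) :=
    ContinuousOn.rpow_const ((continuous_id.sub continuous_const).continuousOn)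
      (fun x _ => Or.inr (by linarith))
  have int1 : IntervalIntegrable (fun t => (t - a) ^ (-α) * (b - t) ^ (α + β - 1))
      volume a b :=
    (intervalIntegrable_rpow_sub_right (by linarith)).mul_continuousOn cont2
  have int2 : IntervalIntegrable (fun t => (t - a) ^ (β - α) * (b - t) ^ (α + β - 1))
      volume a b := (cont1.mul cont2).intervalIntegrable
  have hGint : IntervalIntegrable
      (fun t => C1 * ((t - a) ^ (-α) * (b - t) ^ (α + β - 1)) +
        C2 * ((t - a) ^ (β - α) * (b - t) ^ (α + β - 1))) volume a b :=
    (int1.const_mul C1).add (int2.const_mul C2)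
  -- pointwise bound
  have step1 : |∫ t in a..b, Dplus f a α t * Dminus g b α t| ≤
      ∫ t in a..b, (C1 * ((t - a) ^ (-α) * (b - t) ^ (α + β - 1)) +
        C2 * ((t - a) ^ (β - α) * (b - t) ^ (α + β - 1))) := by
    apply abs_intervalIntegral_le hab.le hGint
    intro t ht
    have h1 := Dplus_bound hα0 (by linarith) hβα hKf hMf ⟨ht.1, ht.2.le⟩
    have h2 := Dminus_bound hα0 (by linarith) hβ hαβ hKg ⟨ht.1.le, ht.2⟩
    have hta : (0:ℝ) < t - a := by linarith [ht.1]
    have hbt : (0:ℝ) < b - t := by linarith [ht.2]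
    have hB1 : 0 ≤ (1 / Real.Gamma (1 - α)) *
        (Mf * (t - a) ^ (-α) + α * (Kf * ((t - a) ^ (β - α) / (β - α)))) := by
      apply mul_nonneg (by positivity)
      apply add_nonneg
      · exact mul_nonneg hMf0 (Real.rpow_nonneg hta.le _)
      · apply mul_nonneg hα0.le
        apply mul_nonneg hKf0
        apply div_nonneg (Real.rpow_nonneg hta.le _) (by linarith)
    rw [abs_mul]
    calc |Dplus f a α t| * |Dminus g b α t|
        ≤ ((1 / Real.Gamma (1 - α)) *
            (Mf * (t - a) ^ (-α) + α * (Kf * ((t - a) ^ (β - α) / (β - α))))) *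
          ((1 / Real.Gamma α) *
            (Kg * (b - t) ^ (α + β - 1) +
              (1 - α) * (Kg * ((b - t) ^ (α + β - 1) / (α + β - 1))))) :=
          mul_le_mul h1 h2 (abs_nonneg _) hB1
      _ = C1 * ((t - a) ^ (-α) * (b - t) ^ (α + β - 1)) +
          C2 * ((t - a) ^ (β - α) * (b - t) ^ (α + β - 1)) := by
          rw [hC1def, hC2def]
          have e1 : α + β - 1 ≠ 0 := by linarith
          have e2 : β - α ≠ 0 := by linarith
          field_simp
          ring
  refine le_trans step1 ?_
  -- compute the integral
  have I1 : ∫ t in a..b, (t - a) ^ (-α) * (b - t) ^ (α + β - 1)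
      = (b - a) ^ β * betaFn (1 - α) (α + β) := by
    have h := integral_beta_shift (u := 1 - α) (v := α + β)
      (by linarith) (by linarith) hab
    rw [show (1 - α) + (α + β) - 1 = β by ring] at h
    rw [← h]
    apply intervalIntegral.integral_congr
    intro t _
    rw [show (1:ℝ) - α - 1 = -α by ring, show α + β - 1 = (α + β) - 1 by ring]
  have I2 : ∫ t in a..b, (t - a) ^ (β - α) * (b - t) ^ (α + β - 1)
      = (b - a) ^ (2 * β) * betaFn (β - α + 1) (α + β) := by
    have h := integral_beta_shift (u := β - α + 1) (v := α + β)
      (by linarith) (by linarith) hab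
    rw [show (β - α + 1) + (α + β) - 1 = 2 * β by ring] at h
    rw [← h]
    apply intervalIntegral.integral_congr
    intro t _
    rw [show β - α + 1 - 1 = β - α by ring, show α + β - 1 = (α + β) - 1 by ring]
  rw [intervalIntegral.integral_add (int1.const_mul C1) (int2.const_mul C2),
    intervalIntegral.integral_const_mul, intervalIntegral.integral_const_mul, I1, I2]
  -- final algebra
  set X := (b - a) ^ β with hX
  set Y := (b - a) ^ (2 * β) with hY
  have hX0 : 0 ≤ X := Real.rpow_nonneg (by linarith) _
  have hY0 : 0 ≤ Y := Real.rpow_nonneg (by linarith) _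
  have hB1' : betaFn (1 - α) (α + β) = betaFn (α + β) (1 - α) := betaFn_symm _ _
  have hB2' : betaFn (β - α + 1) (α + β) = betaFn (α + β) (1 + β - α) := by
    rw [betaFn_symm, show β - α + 1 = 1 + β - α by ring]
  set B1 := betaFn (α + β) (1 - α) with hB1def
  set B2 := betaFn (α + β) (1 + β - α) with hB2def
  have hB10 : 0 ≤ B1 := betaFn_nonneg (by linarith) (by linarith)
  have hB20 : 0 ≤ B2 := betaFn_nonneg (by linarith) (by linarith)
  rw [hB1', hB2']
  set k1 := β * B1 / ((α + β - 1) * Real.Gamma α * Real.Gamma (1 - α)) with hk1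
  set k2 := α * β * B2 / ((α + β - 1) * (β - α) * Real.Gamma α * Real.Gamma (1 - α)) with hk2
  have hkconst : kConst α β = k1 + k2 := by
    rw [hk1, hk2, hB1def, hB2def]; rfl
  have hden2 : 0 < (α + β - 1) * Real.Gamma α * Real.Gamma (1 - α) :=
    mul_pos (mul_pos (by linarith) hΓ2) hΓ1
  have hk10 : 0 ≤ k1 := by
    rw [hk1]
    exact div_nonneg (mul_nonneg hβ0.le hB10) hden2.le
  have hk20 : 0 ≤ k2 := by
    rw [hk2]
    refine div_nonneg (mul_nonneg (mul_nonneg hα0.le hβ0.le) hB20) ?_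
    have : (0:ℝ) < (α + β - 1) * (β - α) * Real.Gamma α * Real.Gamma (1 - α) :=
      mul_pos (mul_pos (mul_pos (by linarith) (by linarith)) hΓ2) hΓ1
    exact this.le
  have e1 : C1 * (X * B1) = k1 * Kg * (Mf * X) := by
    rw [hC1def, hk1]
    ring
  have e2 : C2 * (Y * B2) = k2 * Kg * (Kf * Y) := by
    rw [hC2def, hk2]
    ring
  rw [hkconst]
  calc C1 * (X * B1) + C2 * (Y * B2) = k1 * Kg * (Mf * X) + k2 * Kg * (Kf * Y) := by
        rw [e1, e2]
    _ ≤ (k1 + k2) * Kg * (Mf * X + Kf * Y) := by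
        have p1 := mul_nonneg hMf0 hX0
        have p2 := mul_nonneg hKf0 hY0
        have hq : (k1 + k2) * Kg * (Mf * X + Kf * Y)
            = (k1 * Kg * (Mf * X) + k2 * Kg * (Kf * Y)) +
              (k1 * Kg * (Kf * Y) + k2 * Kg * (Mf * X)) := by ring
        rw [hq]
        have h5 : 0 ≤ k1 * Kg * (Kf * Y) + k2 * Kg * (Mf * X) :=
          add_nonneg (mul_nonneg (mul_nonneg hk10 hKg0) p2)
            (mul_nonneg (mul_nonneg hk20 hKg0) p1)
        linarith
end

section
/- Let (Ω, ℱ, P) be a probability space, (E, ℰ) a measurable space, X : Ω → E a measurable map, and let ν := P ∘ X^{−1} be the law of X. Let Q be a probability measure on (E, ℰ) with Q ≪ ν, and let f := dQ/dν be its Radon–Nikodym derivative. Define the measure Q̃ on (Ω, ℱ) by dQ̃ := f(X) dP (i.e., Q̃ = P.withDensity (f ∘ X)). Then Q̃ is a probability measure and the Kullback–Leibler divergences satisfy H(Q̃ | P) = H(Q | ν), where H(μ | λ) := ∫ log(dμ/dλ) dμ if μ ≪ λ and +∞ otherwise. -/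
open MeasureTheory
open scoped Classical

/-- Relative entropy (Kullback–Leibler divergence): `H(μ|ν) = ∫ log(dμ/dν) dμ` if `μ ≪ ν`
(with value `+∞` if the integral diverges), and `+∞` otherwise. -/
noncomputable def relEntropy {α : Type*} [MeasurableSpace α] (μ ν : Measure α) : EReal :=
  if μ ≪ ν ∧ Integrable (llr μ ν) μ then ((∫ x, llr μ ν x ∂μ : ℝ) : EReal) else ⊤

/-- The entropy-transfer identity used in the proof of Theorem 2.3: if `ν = P ∘ X⁻¹` is the
law of `X`, `Q ≪ ν` with density `f = dQ/dν`, and `dQ̃ = f(X) dP`, then `Q̃` is a probability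
measure and `H(Q̃|P) = H(Q|ν)`. -/
theorem relEntropy_withDensity_comp {Ω E : Type*} [MeasurableSpace Ω] [MeasurableSpace E]
    (P : Measure Ω) [IsProbabilityMeasure P] (X : Ω → E) (hX : Measurable X)
    (Q : Measure E) [IsProbabilityMeasure Q] (hQ : Q ≪ P.map X) :
    IsProbabilityMeasure (P.withDensity (fun ω => Q.rnDeriv (P.map X) (X ω))) ∧
      relEntropy (P.withDensity (fun ω => Q.rnDeriv (P.map X) (X ω))) P =
        relEntropy Q (P.map X) := by
  set ν := P.map X with hν
  set f := Q.rnDeriv ν with hf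
  have hfm : Measurable f := Measure.measurable_rnDeriv Q ν
  have hfXm : Measurable (fun ω => f (X ω)) := hfm.comp hX
  set Q' := P.withDensity (fun ω => f (X ω)) with hQ'
  have hmap : Q'.map X = Q := by
    ext s hs
    rw [Measure.map_apply hX hs, hQ', withDensity_apply _ (hX hs)]
    have : ∫⁻ ω in X ⁻¹' s, f (X ω) ∂P = ∫⁻ x in s, f x ∂ν := by
      rw [hν, setLIntegral_map hs hfm hX]
    rw [this, ← withDensity_apply _ hs, Measure.withDensity_rnDeriv_eq Q ν hQ]
  have hprob : IsProbabilityMeasure Q' := by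
    constructor
    have h1 : Q'.map X Set.univ = Q Set.univ := by rw [hmap]
    rw [Measure.map_apply hX MeasurableSet.univ, Set.preimage_univ] at h1
    simpa using h1
  refine ⟨hprob, ?_⟩
  have hac : Q' ≪ P := withDensity_absolutelyContinuous _ _
  have hrn : Q'.rnDeriv P =ᵐ[P] fun ω => f (X ω) :=
    Measure.rnDeriv_withDensity P hfXm
  have hllr : llr Q' P =ᵐ[Q'] fun ω => llr Q ν (X ω) := by
    filter_upwards [hac.ae_le hrn] with ω hω
    simp [llr, hω]
    rfl
  have hmeas : AEStronglyMeasurable (llr Q ν) (Q'.map X) :=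
    (measurable_llr Q ν).aestronglyMeasurable
  have h2 : Integrable (llr Q ν) (Q'.map X) ↔ Integrable ((llr Q ν) ∘ X) Q' :=
    integrable_map_measure hmeas hX.aemeasurable
  rw [hmap] at h2
  have hint : Integrable (llr Q' P) Q' ↔ Integrable (llr Q ν) Q :=
    (integrable_congr hllr).trans h2.symm
  have hintg : Integrable (llr Q' P) Q' →
      ∫ ω, llr Q' P ω ∂Q' = ∫ x, llr Q ν x ∂Q := by
    intro _
    have h3 : ∫ x, llr Q ν x ∂(Q'.map X) = ∫ ω, llr Q ν (X ω) ∂Q' :=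
      integral_map hX.aemeasurable hmeas
    rw [hmap] at h3
    rw [integral_congr_ae hllr, ← h3]
  unfold relEntropy
  by_cases hI : Integrable (llr Q ν) Q
  · rw [if_pos ⟨hac, hint.mpr hI⟩, if_pos ⟨hQ, hI⟩, hintg (hint.mpr hI)]
  · rw [if_neg (fun h => hI (hint.mp h.2)), if_neg (fun h => hI h.2)]
end

section
/- Let 0 < σ₁ ≤ σ₂, L_σ ≥ 0, L_b ≥ 0, B̄ ≥ 0. Let σ : ℝ → ℝ satisfy σ₁ ≤ σ(z) ≤ σ₂ and |σ(z)−σ(z')| ≤ L_σ |z−z'| for all z, z', and let b : ℝ → ℝ satisfy |b(z)| ≤ B̄ and |b(z)−b(z')| ≤ L_b |z−z'| for all z, z'. Define F : ℝ → ℝ by F(y) := ∫_0^y dz/σ(z); F is a strictly increasing bijection of ℝ. Then the function b̃ := (b/σ) ∘ F^{−1} is Lipschitz with constant σ₂ (L_b σ₂ + L_σ B̄) / σ₁², i.e., for all x, y ∈ ℝ, | b(F^{−1}(x))/σ(F^{−1}(x)) − b(F^{−1}(y))/σ(F^{−1}(y)) | ≤ ( σ₂ (L_b σ₂ + L_σ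 B̄) / σ₁² ) · |x − y|. -/
open MeasureTheory intervalIntegral Filter

/-- The Lamperti transform `F(y) = ∫_0^y dz/σ(z)`. -/
noncomputable def lamperti (σ : ℝ → ℝ) (y : ℝ) : ℝ :=
  ∫ z in (0 : ℝ)..y, 1 / σ z

lemma lamperti_sub_bounds (σ₁ σ₂ : ℝ) (σ : ℝ → ℝ) (hσ₁ : 0 < σ₁) (hσ₁₂ : σ₁ ≤ σ₂)
    (hσbd : ∀ z : ℝ, σ₁ ≤ σ z ∧ σ z ≤ σ₂)
    (hcont : Continuous σ) :
    ∀ a c : ℝ, a ≤ c →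
      (c - a) / σ₂ ≤ lamperti σ c - lamperti σ a ∧
        lamperti σ c - lamperti σ a ≤ (c - a) / σ₁ := by
  have hne : ∀ z, σ z ≠ 0 := fun z => ne_of_gt (lt_of_lt_of_le hσ₁ (hσbd z).1)
  have hcont' : Continuous fun z => 1 / σ z := continuous_const.div hcont hne
  have hint : ∀ a c : ℝ, IntervalIntegrable (fun z => 1 / σ z) volume a c :=
    fun a c => hcont'.intervalIntegrable a c
  intro a c hac
  have hadd := intervalIntegral.integral_add_adjacent_intervals (hint 0 a) (hint a c)
  have heq : lamperti σ c - lamperti σ a = ∫ z in a..c, 1 / σ z := by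
    simp only [lamperti]; linarith
  have hσ₂pos : (0:ℝ) < σ₂ := lt_of_lt_of_le hσ₁ hσ₁₂
  have hlo : ∫ z in a..c, (1/σ₂ : ℝ) ≤ ∫ z in a..c, 1 / σ z := by
    apply intervalIntegral.integral_mono_on hac (intervalIntegrable_const) (hint a c)
    intro x _
    exact one_div_le_one_div_of_le (lt_of_lt_of_le hσ₁ (hσbd x).1) (hσbd x).2
  have hhi : ∫ z in a..c, 1 / σ z ≤ ∫ z in a..c, (1/σ₁ : ℝ) := by
    apply intervalIntegral.integral_mono_on hac (hint a c) (intervalIntegrable_const)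
    intro x _
    exact one_div_le_one_div_of_le hσ₁ (hσbd x).1
  rw [intervalIntegral.integral_const, smul_eq_mul] at hlo hhi
  constructor
  · rw [heq]; rw [div_eq_mul_one_div]; linarith
  · rw [heq]; rw [div_eq_mul_one_div (c-a)]; linarith

/-- The drift `b̃ = (b/σ) ∘ F⁻¹` of the Lamperti-transformed equation is Lipschitz with
constant `σ₂ (L_b σ₂ + L_σ B̄)/σ₁²`. -/
theorem lamperti_drift_lipschitz (σ₁ σ₂ Lσ Lb Bbar : ℝ) (σ b : ℝ → ℝ)
    (hσ₁ : 0 < σ₁) (hσ₁₂ : σ₁ ≤ σ₂) (hLσ : 0 ≤ Lσ) (hLb : 0 ≤ Lb) (hBbar : 0 ≤ Bbar)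
    (hσbd : ∀ z : ℝ, σ₁ ≤ σ z ∧ σ z ≤ σ₂)
    (hσlip : ∀ z z' : ℝ, |σ z - σ z'| ≤ Lσ * |z - z'|)
    (hbbd : ∀ z : ℝ, |b z| ≤ Bbar)
    (hblip : ∀ z z' : ℝ, |b z - b z'| ≤ Lb * |z - z'|) :
    StrictMono (lamperti σ) ∧ Function.Bijective (lamperti σ) ∧
      ∀ x y : ℝ,
        |b (Function.invFun (lamperti σ) x) / σ (Function.invFun (lamperti σ) x) -
            b (Function.invFun (lamperti σ) y) / σ (Function.invFun (lamperti σ) y)| ≤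
          σ₂ * (Lb * σ₂ + Lσ * Bbar) / σ₁ ^ 2 * |x - y| := by
  have hσ₂pos : (0:ℝ) < σ₂ := lt_of_lt_of_le hσ₁ hσ₁₂
  -- σ is continuous
  have hcont : Continuous σ := by
    have : LipschitzWith ⟨Lσ, hLσ⟩ σ := by
      apply LipschitzWith.of_dist_le_mul
      intro z z'
      rw [Real.dist_eq, Real.dist_eq]; exact hσlip z z'
    exact this.continuous
  have key := lamperti_sub_bounds σ₁ σ₂ σ hσ₁ hσ₁₂ hσbd hcont
  set F := lamperti σ with hF
  have hmono : StrictMono F := by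
    intro u v huv
    have h1 := (key u v (le_of_lt huv)).1
    have h2 : (0:ℝ) < (v - u)/σ₂ := div_pos (by linarith) hσ₂pos
    linarith
  -- F is continuous (Lipschitz with constant 1/σ₁)
  have hFlip : ∀ u v : ℝ, |F u - F v| ≤ |u - v| / σ₁ := by
    intro u v
    rcases le_total u v with h | h
    · have h1 := key u v h
      rw [abs_sub_comm, abs_of_nonneg (by linarith [div_nonneg (by linarith : (0:ℝ) ≤ v - u) hσ₂pos.le, h1.1] : (0:ℝ) ≤ F v - F u),
        abs_sub_comm, abs_of_nonneg (by linarith : (0:ℝ) ≤ v - u)]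
      exact h1.2
    · have h1 := key v u h
      rw [abs_of_nonneg (by linarith [div_nonneg (by linarith : (0:ℝ) ≤ u - v) hσ₂pos.le, h1.1] : (0:ℝ) ≤ F u - F v),
        abs_of_nonneg (by linarith : (0:ℝ) ≤ u - v)]
      exact h1.2
  have hFcont : Continuous F := by
    have : LipschitzWith ⟨1/σ₁, by positivity⟩ F := by
      apply LipschitzWith.of_dist_le_mul
      intro u v
      have := hFlip u v
      rw [div_eq_mul_one_div, mul_comm] at this
      rw [Real.dist_eq, Real.dist_eq]; exact this
    exact this.continuous
  have hF0 : F 0 = 0 := by simp [hF, lamperti]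
  have hsurj : Function.Surjective F := by
    apply Continuous.surjective hFcont
    · apply tendsto_atTop_mono' _ _ (tendsto_id.atTop_div_const hσ₂pos)
      filter_upwards [eventually_ge_atTop (0:ℝ)] with t ht
      have := (key 0 t ht).1
      simp only [hF0] at this
      simpa using this
    · apply tendsto_atBot_mono' _ _ (tendsto_id.atBot_div_const hσ₂pos)
      filter_upwards [eventually_le_atBot (0:ℝ)] with t ht
      have := (key t 0 ht).1
      simp only [hF0] at this
      have : F t ≤ t / σ₂ := by
        have h2 : (0 - t)/σ₂ = -(t/σ₂) := by ring
        linarith [this, h2 ▸ this]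
      simpa using this
  refine ⟨hmono, ⟨hmono.injective, hsurj⟩, ?_⟩
  intro x y
  set u := Function.invFun F x with hu
  set v := Function.invFun F y with hv
  have hFu : F u = x := Function.rightInverse_invFun hsurj x
  have hFv : F v = y := Function.rightInverse_invFun hsurj y
  -- |u - v| ≤ σ₂ * |x - y|
  have huv : |u - v| ≤ σ₂ * |x - y| := by
    rcases le_total u v with h | h
    · have h1 := (key u v h).1
      have h2 : v - u ≤ (F v - F u) * σ₂ := (div_le_iff₀ hσ₂pos).mp h1
      have h0 : (0:ℝ) ≤ (v - u)/σ₂ := div_nonneg (by linarith) hσ₂pos.le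
      rw [abs_sub_comm, abs_of_nonneg (by linarith : (0:ℝ) ≤ v - u),
        abs_sub_comm, abs_of_nonneg (by rw [← hFu, ← hFv]; linarith : (0:ℝ) ≤ y - x),
        ← hFu, ← hFv]
      linarith
    · have h1 := (key v u h).1
      have h2 : u - v ≤ (F u - F v) * σ₂ := (div_le_iff₀ hσ₂pos).mp h1
      have h0 : (0:ℝ) ≤ (u - v)/σ₂ := div_nonneg (by linarith) hσ₂pos.le
      rw [abs_of_nonneg (by linarith : (0:ℝ) ≤ u - v),
        abs_of_nonneg (by rw [← hFu, ← hFv]; linarith : (0:ℝ) ≤ x - y),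
        ← hFu, ← hFv]
      linarith
  -- quotient Lipschitz bound
  have hσu := hσbd u
  have hσv := hσbd v
  have hσupos : (0:ℝ) < σ u := lt_of_lt_of_le hσ₁ hσu.1
  have hσvpos : (0:ℝ) < σ v := lt_of_lt_of_le hσ₁ hσv.1
  have hquot : |b u / σ u - b v / σ v| ≤ (Lb * σ₂ + Lσ * Bbar) / σ₁ ^ 2 * |u - v| := by
    rw [div_sub_div _ _ (ne_of_gt hσupos) (ne_of_gt hσvpos), abs_div, mul_comm (σ u) (b v)]
    have hnum : |b u * σ v - b v * σ u| ≤ (Lb * σ₂ + Lσ * Bbar) * |u - v| := by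
      have h1 : b u * σ v - b v * σ u = (b u - b v) * σ v + b v * (σ v - σ u) := by ring
      rw [h1]
      calc |(b u - b v) * σ v + b v * (σ v - σ u)|
          ≤ |(b u - b v) * σ v| + |b v * (σ v - σ u)| := abs_add_le _ _
        _ = |b u - b v| * |σ v| + |b v| * |σ v - σ u| := by rw [abs_mul, abs_mul]
        _ ≤ (Lb * |u - v|) * σ₂ + Bbar * (Lσ * |v - u|) := by
            apply add_le_add
            · apply mul_le_mul (hblip u v) _ (abs_nonneg _) (by positivity)
              rw [abs_of_pos hσvpos]; exact hσv.2
            · exact mul_le_mul (hbbd v) (hσlip v u) (abs_nonneg _) hBbar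
        _ = (Lb * σ₂ + Lσ * Bbar) * |u - v| := by rw [abs_sub_comm v u]; ring
    have hden : σ₁ ^ 2 ≤ |σ u * σ v| := by
      rw [abs_of_pos (by positivity)]
      nlinarith
    calc |b u * σ v - b v * σ u| / |σ u * σ v|
        ≤ ((Lb * σ₂ + Lσ * Bbar) * |u - v|) / σ₁ ^ 2 := by
          apply div_le_div₀ (by positivity) hnum (by positivity) hden
      _ = (Lb * σ₂ + Lσ * Bbar) / σ₁ ^ 2 * |u - v| := by ring
  calc |b u / σ u - b v / σ v| ≤ (Lb * σ₂ + Lσ * Bbar) / σ₁ ^ 2 * |u - v| := hquot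
    _ ≤ (Lb * σ₂ + Lσ * Bbar) / σ₁ ^ 2 * (σ₂ * |x - y|) := by
        apply mul_le_mul_of_nonneg_left huv (by positivity)
    _ = σ₂ * (Lb * σ₂ + Lσ * Bbar) / σ₁ ^ 2 * |x - y| := by ring
end

section
/- Let 0 < σ₁ ≤ σ₂ and B ∈ ℝ. Let b, σ : ℝ → ℝ be differentiable with σ₁ ≤ σ(z) ≤ σ₂ for all z, and suppose b'(z)σ(z) − σ'(z)b(z) ≤ B for all z ∈ ℝ. Define F : ℝ → ℝ by F(y) := ∫_0^y dz/σ(z), a strictly increasing bijection of ℝ, and b̃ := (b/σ) ∘ F^{−1}. Then for all x, y ∈ ℝ, (x − y) · ( b̃(x) − b̃(y) ) ≤ max( B/σ₁, B/σ₂ ) · (x − y)². In particular, if B ≥ 0 the one-sided Lipschitz constant is B/σ₁, and if B < 0 it is B/σ₂. -/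
open MeasureTheory intervalIntegral Filter

/-- One-sided Lipschitz (stability) estimate for the drift `b̃ = (b/σ) ∘ F⁻¹` of the
Lamperti-transformed equation: if `b'σ - σ'b ≤ B` then
`(x-y)(b̃(x) - b̃(y)) ≤ max(B/σ₁, B/σ₂) (x-y)²`. -/
theorem lamperti_drift_one_sided_lipschitz (σ₁ σ₂ B : ℝ) (b σ : ℝ → ℝ)
    (hσ₁ : 0 < σ₁) (hσ₁₂ : σ₁ ≤ σ₂)
    (hσbd : ∀ z : ℝ, σ₁ ≤ σ z ∧ σ z ≤ σ₂)
    (hb : Differentiable ℝ b) (hσ : Differentiable ℝ σ)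
    (hB : ∀ z : ℝ, deriv b z * σ z - deriv σ z * b z ≤ B) :
    ∀ x y : ℝ,
      (x - y) *
          (b (Function.invFun (lamperti σ) x) / σ (Function.invFun (lamperti σ) x) -
            b (Function.invFun (lamperti σ) y) / σ (Function.invFun (lamperti σ) y)) ≤
        max (B / σ₁) (B / σ₂) * (x - y) ^ 2 := by
  set M := max (B / σ₁) (B / σ₂) with hM
  have hσpos : ∀ z, 0 < σ z := fun z => lt_of_lt_of_le hσ₁ (hσbd z).1
  have hσne : ∀ z, σ z ≠ 0 := fun z => (hσpos z).ne'
  have hσ₂ : 0 < σ₂ := lt_of_lt_of_le hσ₁ hσ₁₂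
  have hcont : Continuous (fun z => 1 / σ z) :=
    continuous_const.div hσ.continuous hσne
  have hF : ∀ y : ℝ, HasDerivAt (lamperti σ) (1 / σ y) y := fun y =>
    (hcont.integral_hasStrictDerivAt 0 y).hasDerivAt
  have hFdiff : Differentiable ℝ (lamperti σ) := fun y => (hF y).differentiableAt
  have hBM : ∀ z, B / σ z ≤ M := by
    intro z
    rcases le_or_gt 0 B with h0 | h0
    · refine le_trans ?_ (le_max_left _ _)
      gcongr
      exact (hσbd z).1
    · refine le_trans ?_ (le_max_right _ _)
      rw [div_le_div_iff₀ (hσpos z) hσ₂]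
      nlinarith [(hσbd z).2]
  -- strict monotonicity of F
  have hFmono : StrictMono (lamperti σ) := by
    apply strictMono_of_deriv_pos
    intro z
    rw [(hF z).deriv]
    exact one_div_pos.mpr (hσpos z)
  -- surjectivity of F
  have hψ : ∀ z : ℝ, HasDerivAt (fun w => lamperti σ w - w * (1 / σ₂))
      (1 / σ z - 1 * (1 / σ₂)) z := fun z =>
    (hF z).sub ((hasDerivAt_id z).mul_const _)
  have hψmono : Monotone (fun w => lamperti σ w - w * (1 / σ₂)) := by
    apply monotone_of_deriv_nonneg (fun z => (hψ z).differentiableAt)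
    intro z
    rw [(hψ z).deriv]
    have h1 : 1 / σ₂ ≤ 1 / σ z := by
      rw [div_le_div_iff₀ hσ₂ (hσpos z)]
      nlinarith [(hσbd z).2]
    linarith
  have hF0 : lamperti σ 0 = 0 := intervalIntegral.integral_same
  have hψ0 : (fun w => lamperti σ w - w * (1 / σ₂)) 0 = 0 := by simp [hF0]
  have hlin_top : Tendsto (fun y : ℝ => y * (1 / σ₂)) atTop atTop :=
    Tendsto.atTop_mul_const (by positivity) tendsto_id
  have hlin_bot : Tendsto (fun y : ℝ => y * (1 / σ₂)) atBot atBot :=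
    Tendsto.atBot_mul_const (by positivity) tendsto_id
  have htop : Tendsto (lamperti σ) atTop atTop := by
    apply tendsto_atTop_mono' _ _ hlin_top
    filter_upwards [eventually_ge_atTop (0 : ℝ)] with y hy
    have := hψmono hy
    rw [hψ0] at this
    simpa using this
  have hbot : Tendsto (lamperti σ) atBot atBot := by
    apply tendsto_atBot_mono' _ _ hlin_bot
    filter_upwards [eventually_le_atBot (0 : ℝ)] with y hy
    have := hψmono hy
    rw [hψ0] at this
    simpa using this
  have hsurj : Function.Surjective (lamperti σ) :=
    (hFdiff.continuous).surjective htop hbot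
  have hright : ∀ x : ℝ, lamperti σ (Function.invFun (lamperti σ) x) = x :=
    fun x => Function.rightInverse_invFun hsurj x
  -- monotonicity of φ = M * F - b/σ
  have hφ : ∀ z : ℝ, HasDerivAt (fun w => M * lamperti σ w - b w / σ w)
      (M * (1 / σ z) - (deriv b z * σ z - b z * deriv σ z) / σ z ^ 2) z := fun z =>
    ((hF z).const_mul M).sub ((hb z).hasDerivAt.div (hσ z).hasDerivAt (hσne z))
  have hφmono : Monotone (fun w => M * lamperti σ w - b w / σ w) := by
    apply monotone_of_deriv_nonneg (fun z => (hφ z).differentiableAt)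
    intro z
    rw [(hφ z).deriv]
    have h3 : B ≤ M * σ z := (div_le_iff₀ (hσpos z)).mp (hBM z)
    have key : deriv b z * σ z - b z * deriv σ z ≤ M * σ z :=
      le_trans (by linarith [hB z, mul_comm (b z) (deriv σ z)]) h3
    have h4 : (deriv b z * σ z - b z * deriv σ z) / σ z ^ 2 ≤ M * (1 / σ z) := by
      rw [div_le_iff₀ (pow_pos (hσpos z) 2)]
      have he : M * (1 / σ z) * σ z ^ 2 = M * σ z := by rw [one_div, pow_two, mul_assoc, inv_mul_cancel_left₀ (hσne z)]
      rw [he]; exact key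
    linarith
  -- key one-sided estimate
  have key : ∀ x y : ℝ, y ≤ x →
      b (Function.invFun (lamperti σ) x) / σ (Function.invFun (lamperti σ) x) -
        b (Function.invFun (lamperti σ) y) / σ (Function.invFun (lamperti σ) y)
      ≤ M * (x - y) := by
    intro x y hxy
    set u := Function.invFun (lamperti σ) x
    set v := Function.invFun (lamperti σ) y
    have huv : v ≤ u := by
      rw [← hFmono.le_iff_le]
      rw [hright x, hright y]; exact hxy
    have := hφmono huv
    simp only at this
    have hx : lamperti σ u = x := hright x
    have hy : lamperti σ v = y := hright y
    rw [hx, hy] at this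
    linarith [this]
  intro x y
  rcases le_total y x with h | h
  · have h1 := key x y h
    nlinarith [mul_le_mul_of_nonneg_left h1 (sub_nonneg.mpr h)]
  · have h1 := key y x h
    nlinarith [mul_le_mul_of_nonneg_left h1 (sub_nonneg.mpr h)]
end

section
/- Let c ≥ 2/e be a real number. Then for every real x ≥ 1, ( c · Γ(x+1)² / Γ(2x+1) )^{1/x} ≤ c/2, with equality when x = 1. In particular, for c ≥ 1, sup_{x ≥ 1} ( c · Γ(x+1)² / Γ(2x+1) )^{1/x} = c/2, and hence the supremum over integers k ≥ 1 of ( c · (k!)² / (2k)! )^{1/k} equals c/2. -/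
open Real Filter Set Finset

-- log Gamma differentiable
lemma lgamma_hasDeriv {y : ℝ} (hy : 0 < y) :
    HasDerivAt (fun t => Real.log (Real.Gamma t)) ((Real.Gamma y)⁻¹ * deriv Real.Gamma y) y := by
  have hne : ∀ m : ℕ, y ≠ -m := by
    intro m
    have : (0:ℝ) ≤ m := Nat.cast_nonneg m
    intro h; rw [h] at hy; linarith
  have hG : HasDerivAt Real.Gamma (deriv Real.Gamma y) y :=
    (Real.differentiableAt_Gamma hne).hasDerivAt
  exact (Real.hasDerivAt_log (Real.Gamma_pos_of_pos hy).ne').comp y hG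

-- Gamma'(3) = 1 + 2 Gamma'(2)
lemma gamma_deriv_three : deriv Real.Gamma 3 = 1 + 2 * deriv Real.Gamma 2 := by
  have h2 : (0:ℝ) < 2 := by norm_num
  have hne : ∀ z : ℝ, 0 < z → ∀ m : ℕ, z ≠ -m := by
    intro z hz m h
    have : (0:ℝ) ≤ m := Nat.cast_nonneg m
    rw [h] at hz; linarith
  have hG2 : HasDerivAt Real.Gamma (deriv Real.Gamma 2) 2 :=
    (Real.differentiableAt_Gamma (hne 2 h2)).hasDerivAt
  have hG3 : HasDerivAt Real.Gamma (deriv Real.Gamma 3) 3 :=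
    (Real.differentiableAt_Gamma (hne 3 (by norm_num))).hasDerivAt
  -- u(y) = Gamma (y+1) has derivative Gamma' 3 at 2
  have hu : HasDerivAt (fun y : ℝ => Real.Gamma (y + 1)) (deriv Real.Gamma 3) 2 := by
    have h23 : HasDerivAt Real.Gamma (deriv Real.Gamma 3) (id (2:ℝ) + 1) := by
      norm_num [hG3]
    have := h23.comp 2 ((hasDerivAt_id (2:ℝ)).add_const 1)
    simpa [Function.comp_def] using this
  -- v(y) = y * Gamma y has derivative Gamma 2 + 2 * Gamma' 2 at 2
  have hv : HasDerivAt (fun y : ℝ => y * Real.Gamma y)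
      (1 * Real.Gamma 2 + 2 * deriv Real.Gamma 2) 2 :=
    (hasDerivAt_id (2:ℝ)).mul hG2
  have heq : (fun y : ℝ => Real.Gamma (y + 1)) =ᶠ[nhds (2:ℝ)] fun y => y * Real.Gamma y := by
    filter_upwards [eventually_gt_nhds h2] with y hy
    exact Real.Gamma_add_one (by positivity)
  have hu' : HasDerivAt (fun y : ℝ => Real.Gamma (y + 1))
      (1 * Real.Gamma 2 + 2 * deriv Real.Gamma 2) 2 := hv.congr_of_eventuallyEq heq
  have := hu.unique hu'
  rw [this, Real.Gamma_two]; ring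

lemma convexOn_log_sub_log {c d : ℝ} (hc : 0 < c) (hcd : c ≤ d) :
    ConvexOn ℝ (Set.Ioi (0:ℝ)) (fun x => Real.log (x + d) - Real.log (x + c)) := by
  have hd : 0 < d := lt_of_lt_of_le hc hcd
  set g : ℝ → ℝ := fun x => (x + d)⁻¹ - (x + c)⁻¹ with hg
  have hderiv : ∀ x ∈ Set.Ioi (0:ℝ),
      HasDerivAt (fun x => Real.log (x + d) - Real.log (x + c)) (g x) x := by
    intro x hx
    have hxd : 0 < x + d := by simp at hx; linarith
    have hxc : 0 < x + c := by simp at hx; linarith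
    have h1 : HasDerivAt (fun x : ℝ => Real.log (x + d)) (x + d)⁻¹ x := by
      simpa [Function.comp_def] using (Real.hasDerivAt_log hxd.ne').comp x ((hasDerivAt_id x).add_const d)
    have h2 : HasDerivAt (fun x : ℝ => Real.log (x + c)) (x + c)⁻¹ x := by
      simpa [Function.comp_def] using (Real.hasDerivAt_log hxc.ne').comp x ((hasDerivAt_id x).add_const c)
    exact h1.sub h2
  -- g is monotone on Ioi 0
  have hmono : MonotoneOn g (Set.Ioi (0:ℝ)) := by
    intro x hx y hy hxy
    simp only [hg]
    have hxc : 0 < x + c := by simp at hx; linarith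
    have hxd : 0 < x + d := by simp at hx; linarith
    have hyc : 0 < y + c := by simp at hy; linarith
    have hyd : 0 < y + d := by simp at hy; linarith
    have e1 : (x + d)⁻¹ - (x + c)⁻¹ = (c - d) / ((x + d) * (x + c)) := by
      rw [inv_sub_inv hxd.ne' hxc.ne']; ring_nf
    have e2 : (y + d)⁻¹ - (y + c)⁻¹ = (c - d) / ((y + d) * (y + c)) := by
      rw [inv_sub_inv hyd.ne' hyc.ne']; ring_nf
    rw [e1, e2, div_le_div_iff₀ (by positivity) (by positivity)]
    have hP : (x + d) * (x + c) ≤ (y + d) * (y + c) := by nlinarith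
    exact mul_le_mul_of_nonpos_left hP (by linarith)
  -- conclude convexity
  have h' : MonotoneOn (deriv fun x => Real.log (x + d) - Real.log (x + c))
      (interior (Set.Ioi (0:ℝ))) := by
    rw [interior_Ioi]
    intro x hx y hy hxy
    rw [(hderiv x hx).deriv, (hderiv y hy).deriv]
    exact hmono hx hy hxy
  refine MonotoneOn.convexOn_of_deriv (convex_Ioi 0) ?_ ?_ h'
  · intro x hx
    exact ((hderiv x hx).differentiableAt).continuousAt.continuousWithinAt
  · rw [interior_Ioi]; intro x hx
    exact ((hderiv x hx).differentiableAt).differentiableWithinAt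

noncomputable def Hfun (x : ℝ) : ℝ := Real.log (Real.Gamma (x + 1/2)) - Real.log (Real.Gamma (x + 1))

noncomputable def Sfun (n : ℕ) (x : ℝ) : ℝ :=
  -((2:ℝ)⁻¹ * Real.log n) +
    ∑ j ∈ Finset.range (n + 1), (Real.log (x + 1 + j) - Real.log (x + (1/2 + j)))

lemma log_gammaSeq {s : ℝ} (hs : 0 < s) {n : ℕ} (hn : 0 < n) :
    Real.log (Real.GammaSeq s n) =
      s * Real.log n + Real.log (n.factorial) - ∑ j ∈ Finset.range (n + 1), Real.log (s + j) := by
  have hnp : (0:ℝ) < n := Nat.cast_pos.mpr hn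
  have hprod : ∀ j ∈ Finset.range (n+1), s + (j:ℝ) ≠ 0 := by
    intro j _
    have : (0:ℝ) ≤ j := Nat.cast_nonneg j
    positivity
  rw [Real.GammaSeq, Real.log_div (by positivity) (Finset.prod_ne_zero_iff.mpr hprod),
    Real.log_mul (by positivity) (by positivity), Real.log_rpow hnp,
    Real.log_prod hprod]

lemma Sfun_eq {x : ℝ} (hx : 0 < x) {n : ℕ} (hn : 0 < n) :
    Sfun n x = Real.log (Real.GammaSeq (x + 1/2) n) - Real.log (Real.GammaSeq (x + 1) n) := by
  rw [Sfun, log_gammaSeq (by linarith) hn, log_gammaSeq (by linarith) hn,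
    Finset.sum_sub_distrib]
  have hcong : ∑ j ∈ Finset.range (n+1), Real.log (x + (1/2 + j))
      = ∑ j ∈ Finset.range (n+1), Real.log (x + 1/2 + j) :=
    Finset.sum_congr rfl fun j _ => by rw [show x + (1/2 + (j:ℝ)) = x + 1/2 + j by ring]
  rw [hcong]
  ring

lemma Sfun_tendsto {x : ℝ} (hx : 0 < x) :
    Filter.Tendsto (fun n => Sfun n x) Filter.atTop (nhds (Hfun x)) := by
  have h1 : Filter.Tendsto (fun n => Real.log (Real.GammaSeq (x + 1/2) n)
      - Real.log (Real.GammaSeq (x + 1) n)) Filter.atTop (nhds (Hfun x)) := by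
    exact ((Real.GammaSeq_tendsto_Gamma (x + 1/2)).log
        (Real.Gamma_pos_of_pos (by linarith)).ne').sub
      ((Real.GammaSeq_tendsto_Gamma (x + 1)).log
        (Real.Gamma_pos_of_pos (by linarith)).ne')
  refine h1.congr' ?_
  filter_upwards [Filter.eventually_gt_atTop 0] with n hn
  exact (Sfun_eq hx hn).symm

lemma convexOn_sum_aux {ι : Type*} (t : Finset ι) (f : ι → ℝ → ℝ)
    (h : ∀ i ∈ t, ConvexOn ℝ (Set.Ioi (0:ℝ)) (f i)) :
    ConvexOn ℝ (Set.Ioi (0:ℝ)) (fun x => ∑ i ∈ t, f i x) := by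
  classical
  induction t using Finset.induction_on with
  | empty => simpa using convexOn_const 0 (convex_Ioi 0)
  | insert a s hnotmem ih =>
    simp only [Finset.sum_insert hnotmem]
    exact (h a (Finset.mem_insert_self a s)).add
      (ih fun i hi => h i (Finset.mem_insert_of_mem hi))



lemma Sfun_convex (n : ℕ) : ConvexOn ℝ (Set.Ioi (0:ℝ)) (Sfun n) := by
  have : ConvexOn ℝ (Set.Ioi (0:ℝ)) (fun x =>
      ∑ j ∈ Finset.range (n + 1), (Real.log (x + 1 + j) - Real.log (x + (1/2 + j)))) := by
    apply convexOn_sum_aux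
    intro j _
    have hj : (0:ℝ) ≤ j := Nat.cast_nonneg j
    have := convexOn_log_sub_log (c := 1/2 + j) (d := 1 + j) (by linarith) (by linarith)
    convert this using 2 with x
    rw [add_assoc]
  have h2 := (convexOn_const (-((2:ℝ)⁻¹ * Real.log n)) (convex_Ioi 0)).add this
  convert h2 using 1 <;> rfl

lemma Hfun_convex : ConvexOn ℝ (Set.Ioi (0:ℝ)) Hfun := by
  refine ⟨convex_Ioi 0, ?_⟩
  intro x hx y hy a b ha hb hab
  have hmem : a • x + b • y ∈ Set.Ioi (0:ℝ) := (convex_Ioi 0) hx hy ha hb hab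
  have hR : Filter.Tendsto (fun n => a * Sfun n x + b * Sfun n y) Filter.atTop
      (nhds (a * Hfun x + b * Hfun y)) :=
    ((Sfun_tendsto hx).const_mul a).add ((Sfun_tendsto hy).const_mul b)
  have hle : ∀ n, Sfun n (a • x + b • y) ≤ a * Sfun n x + b * Sfun n y := by
    intro n
    simpa [smul_eq_mul] using (Sfun_convex n).2 hx hy ha hb hab
  simpa [smul_eq_mul] using le_of_tendsto_of_tendsto' (Sfun_tendsto hmem) hR hle

noncomputable def Kfun (x : ℝ) : ℝ := Hfun x + (2 * Real.log 2 - 1) * x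
noncomputable def Ffun (x : ℝ) : ℝ :=
  Real.log 2 + 2 * Real.log (Real.Gamma (x + 1)) - Real.log (Real.Gamma (2 * x + 1)) + x - 1


lemma Gamma_3 : Real.Gamma 3 = 2 := by
  rw [show (3:ℝ) = ((2:ℕ):ℝ) + 1 by norm_num, Real.Gamma_nat_eq_factorial]; norm_num

-- duplication identity in log form
lemma dup_log {x : ℝ} (hx : 0 < x) :
    Real.log (Real.Gamma (2 * x + 1)) =
      Real.log (Real.Gamma (x + 1/2)) + Real.log (Real.Gamma (x + 1))
        + 2 * x * Real.log 2 - Real.log (Real.sqrt Real.pi) := by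
  have h := Real.Gamma_mul_Gamma_add_half (x + 1/2)
  rw [show x + 1/2 + 1/2 = x + 1 by ring, show 2 * (x + 1/2) = 2 * x + 1 by ring] at h
  rw [show (1:ℝ) - (2 * x + 1) = -(2*x) by ring] at h
  have hg1 : 0 < Real.Gamma (x + 1/2) := Real.Gamma_pos_of_pos (by linarith)
  have hg2 : 0 < Real.Gamma (x + 1) := Real.Gamma_pos_of_pos (by linarith)
  have hg3 : 0 < Real.Gamma (2 * x + 1) := Real.Gamma_pos_of_pos (by linarith)
  have hπ : 0 < Real.sqrt Real.pi := Real.sqrt_pos.mpr Real.pi_pos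
  have hpow : (0:ℝ) < (2:ℝ) ^ (-(2*x)) := Real.rpow_pos_of_pos (by norm_num) _
  have := congrArg Real.log h
  rw [Real.log_mul (by positivity) hπ.ne', Real.log_mul hg3.ne' hpow.ne',
    Real.log_mul hg1.ne' hg2.ne', Real.log_rpow (by norm_num)] at this
  linarith

lemma Ffun_eq_Kfun {x : ℝ} (hx : 0 < x) :
    Ffun x = (Real.log 2 + Real.log (Real.sqrt Real.pi) - 1) - Kfun x := by
  rw [Ffun, Kfun, Hfun, dup_log hx]; ring

lemma Ffun_one : Ffun 1 = 0 := by
  rw [Ffun]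
  norm_num [Real.Gamma_two, Gamma_3]

lemma Ffun_hasDeriv : HasDerivAt Ffun 0 1 := by
  have h2 : HasDerivAt (fun t => Real.log (Real.Gamma t))
      ((Real.Gamma 2)⁻¹ * deriv Real.Gamma 2) ((1:ℝ) + 1) := by
    rw [show (1:ℝ) + 1 = 2 by norm_num]
    exact lgamma_hasDeriv (by norm_num : (0:ℝ) < 2)
  have h3 : HasDerivAt (fun t => Real.log (Real.Gamma t))
      ((Real.Gamma 3)⁻¹ * deriv Real.Gamma 3) (2 * (1:ℝ) + 1) := by
    rw [show 2 * (1:ℝ) + 1 = 3 by norm_num]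
    exact lgamma_hasDeriv (by norm_num : (0:ℝ) < 3)
  have hin1 : HasDerivAt (fun x : ℝ => x + 1) 1 1 := by
    simpa using (hasDerivAt_id (1:ℝ)).add_const 1
  have hin2 : HasDerivAt (fun x : ℝ => 2 * x + 1) 2 1 := by
    simpa using ((hasDerivAt_id (1:ℝ)).const_mul 2).add_const 1
  have hA : HasDerivAt (fun x : ℝ => Real.log (Real.Gamma (x + 1)))
      ((Real.Gamma 2)⁻¹ * deriv Real.Gamma 2 * 1) 1 := by
    have := HasDerivAt.comp_of_eq (hh₂ := h2) (hh := hin1) (hy := by norm_num)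
    simpa [Function.comp_def] using this
  have hB : HasDerivAt (fun x : ℝ => Real.log (Real.Gamma (2 * x + 1)))
      ((Real.Gamma 3)⁻¹ * deriv Real.Gamma 3 * 2) 1 := by
    have := HasDerivAt.comp_of_eq (hh₂ := h3) (hh := hin2) (hy := by norm_num)
    simpa [Function.comp_def] using this
  have hF : HasDerivAt Ffun
      (2 * ((Real.Gamma 2)⁻¹ * deriv Real.Gamma 2 * 1)
        - (Real.Gamma 3)⁻¹ * deriv Real.Gamma 3 * 2 + 1) 1 :=
    ((((hA.const_mul 2).const_add (Real.log 2)).sub hB).add (hasDerivAt_id 1)).sub_const 1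
  have hval : 2 * ((Real.Gamma 2)⁻¹ * deriv Real.Gamma 2 * 1)
      - (Real.Gamma 3)⁻¹ * deriv Real.Gamma 3 * 2 + 1 = 0 := by
    rw [Real.Gamma_two, Gamma_3, gamma_deriv_three]; ring
  exact hval ▸ hF

lemma Kfun_convex : ConvexOn ℝ (Set.Ioi (0:ℝ)) Kfun := by
  have hlog4 : (1:ℝ) ≤ 2 * Real.log 2 := by
    have h4 : Real.exp 1 < 4 := lt_trans Real.exp_one_lt_d9 (by norm_num)
    have := Real.log_lt_log (Real.exp_pos 1) h4
    rw [Real.log_exp] at this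
    have h42 : Real.log 4 = 2 * Real.log 2 := by
      rw [show (4:ℝ) = 2^(2:ℕ) by norm_num, Real.log_pow]; push_cast; ring
    linarith [h42 ▸ this.le]
  have hlin : ConvexOn ℝ (Set.Ioi (0:ℝ)) (fun x : ℝ => (2 * Real.log 2 - 1) * x) := by
    have := (convexOn_id (convex_Ioi (0:ℝ))).smul (c := 2 * Real.log 2 - 1) (by linarith)
    simpa [smul_eq_mul] using this
  have := Hfun_convex.add hlin
  convert this using 1 <;> rfl

lemma Kfun_hasDeriv : HasDerivAt Kfun 0 1 := by
  have heq : Kfun =ᶠ[nhds (1:ℝ)]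
      fun x => (Real.log 2 + Real.log (Real.sqrt Real.pi) - 1) - Ffun x := by
    filter_upwards [eventually_gt_nhds (show (0:ℝ) < 1 by norm_num)] with x hx
    rw [Ffun_eq_Kfun hx]; ring
  have : HasDerivAt (fun x => (Real.log 2 + Real.log (Real.sqrt Real.pi) - 1) - Ffun x)
      (0 - 0) 1 := (hasDerivAt_const _ _).sub Ffun_hasDeriv
  simpa using this.congr_of_eventuallyEq heq

lemma Ffun_nonpos {x : ℝ} (hx : 1 ≤ x) : Ffun x ≤ 0 := by
  rcases eq_or_lt_of_le hx with h | h
  · rw [← h, Ffun_one]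
  · have h1 : (1:ℝ) ∈ Set.Ioi (0:ℝ) := by norm_num
    have hx0 : x ∈ Set.Ioi (0:ℝ) := by simp; linarith
    have hs := Kfun_convex.le_slope_of_hasDerivAt h1 hx0 h Kfun_hasDeriv
    rw [slope_def_field] at hs
    have hnum : 0 ≤ Kfun x - Kfun 1 := by
      have hd : 0 < x - 1 := by linarith
      have := mul_nonneg hs hd.le
      rw [div_mul_cancel₀] at this
      · linarith
      · exact hd.ne'
    have hK1 : Kfun 1 = Real.log 2 + Real.log (Real.sqrt Real.pi) - 1 := by
      have := Ffun_eq_Kfun (show (0:ℝ) < 1 by norm_num)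
      rw [Ffun_one] at this; linarith
    have := Ffun_eq_Kfun (show (0:ℝ) < x by linarith)
    rw [this, ← hK1]
    linarith

lemma core_ineq {x : ℝ} (hx : 1 ≤ x) :
    2 * Real.Gamma (x + 1) ^ 2 / Real.Gamma (2 * x + 1) ≤ Real.exp (1 - x) := by
  have hg2 : 0 < Real.Gamma (x + 1) := Real.Gamma_pos_of_pos (by linarith)
  have hg3 : 0 < Real.Gamma (2 * x + 1) := Real.Gamma_pos_of_pos (by linarith)
  have hpos : 0 < 2 * Real.Gamma (x + 1) ^ 2 / Real.Gamma (2 * x + 1) := by positivity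
  have hlog : Real.log (2 * Real.Gamma (x + 1) ^ 2 / Real.Gamma (2 * x + 1)) ≤ 1 - x := by
    rw [Real.log_div (by positivity) hg3.ne', Real.log_mul (by norm_num) (by positivity),
      Real.log_pow]
    have := Ffun_nonpos hx
    rw [Ffun] at this
    push_cast
    linarith
  calc 2 * Real.Gamma (x + 1) ^ 2 / Real.Gamma (2 * x + 1)
      = Real.exp (Real.log (2 * Real.Gamma (x + 1) ^ 2 / Real.Gamma (2 * x + 1))) :=
        (Real.exp_log hpos).symm
    _ ≤ Real.exp (1 - x) := Real.exp_le_exp.mpr hlog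



/-- Optimization of Section 6: for `c ≥ 2/e`, `(c Γ(x+1)²/Γ(2x+1))^{1/x} ≤ c/2` for all
`x ≥ 1`, with equality at `x = 1`; in particular, for `c ≥ 1` the suprema over reals `x ≥ 1`
and over integers `k ≥ 1` both equal `c/2`. -/
theorem gamma_ratio_optimization (c : ℝ) (hc : 2 / Real.exp 1 ≤ c) :
    (∀ x : ℝ, 1 ≤ x →
        (c * Real.Gamma (x + 1) ^ 2 / Real.Gamma (2 * x + 1)) ^ (1 / x) ≤ c / 2) ∧
      (c * Real.Gamma ((1 : ℝ) + 1) ^ 2 / Real.Gamma (2 * (1 : ℝ) + 1)) ^ (1 / (1 : ℝ)) =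
        c / 2 ∧
      (1 ≤ c →
        (⨆ x : {x : ℝ // 1 ≤ x},
            (c * Real.Gamma ((x : ℝ) + 1) ^ 2 / Real.Gamma (2 * (x : ℝ) + 1)) ^ (1 / (x : ℝ)))
          = c / 2 ∧
        (⨆ k : {k : ℕ // 1 ≤ k},
            (c * (((k : ℕ).factorial : ℝ)) ^ 2 / (((2 * (k : ℕ)).factorial : ℝ)))
              ^ (1 / ((k : ℕ) : ℝ)))
          = c / 2) := by

  have hc0 : (0:ℝ) < c := lt_of_lt_of_le (by positivity) hc
  have hc2 : (0:ℝ) < c / 2 := by linarith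
  have part1 : ∀ x : ℝ, 1 ≤ x →
      (c * Real.Gamma (x + 1) ^ 2 / Real.Gamma (2 * x + 1)) ^ (1 / x) ≤ c / 2 := by
    intro x hx
    have hx0 : (0:ℝ) < x := by linarith
    have hg2 : 0 < Real.Gamma (x + 1) := Real.Gamma_pos_of_pos (by linarith)
    have hg3 : 0 < Real.Gamma (2 * x + 1) := Real.Gamma_pos_of_pos (by linarith)
    have hbase : c * Real.Gamma (x + 1) ^ 2 / Real.Gamma (2 * x + 1) ≤ (c / 2) ^ x := by
      have e0 : c * Real.Gamma (x + 1) ^ 2 / Real.Gamma (2 * x + 1)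
          = (c / 2) * (2 * Real.Gamma (x + 1) ^ 2 / Real.Gamma (2 * x + 1)) := by
        field_simp
      have e1 : (c / 2) * (2 * Real.Gamma (x + 1) ^ 2 / Real.Gamma (2 * x + 1))
          ≤ (c / 2) * Real.exp (1 - x) :=
        mul_le_mul_of_nonneg_left (core_ineq hx) hc2.le
      have e2 : Real.exp (1 - x) ≤ (c / 2) ^ (x - 1) := by
        have hE : Real.exp (-1) ^ (x - 1) = Real.exp (1 - x) := by
          rw [Real.rpow_def_of_pos (Real.exp_pos _), Real.log_exp]
          ring_nf
        have hle : Real.exp (-1) ≤ c / 2 := by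
          rw [Real.exp_neg]
          rw [div_le_iff₀ (Real.exp_pos 1)] at hc
          rw [inv_le_iff_one_le_mul₀ (Real.exp_pos 1)]
          linarith
        calc Real.exp (1 - x) = Real.exp (-1) ^ (x - 1) := hE.symm
          _ ≤ (c / 2) ^ (x - 1) :=
            Real.rpow_le_rpow (Real.exp_pos _).le hle (by linarith)
      have e3 : (c / 2) * (c / 2) ^ (x - 1) = (c / 2) ^ x := by
        rw [show x = 1 + (x - 1) by ring, Real.rpow_add hc2, Real.rpow_one]
        ring_nf
      calc c * Real.Gamma (x + 1) ^ 2 / Real.Gamma (2 * x + 1)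
          = (c / 2) * (2 * Real.Gamma (x + 1) ^ 2 / Real.Gamma (2 * x + 1)) := e0
        _ ≤ (c / 2) * Real.exp (1 - x) := e1
        _ ≤ (c / 2) * (c / 2) ^ (x - 1) :=
            mul_le_mul_of_nonneg_left e2 hc2.le
        _ = (c / 2) ^ x := e3
    calc (c * Real.Gamma (x + 1) ^ 2 / Real.Gamma (2 * x + 1)) ^ (1 / x)
        ≤ ((c / 2) ^ x) ^ (1 / x) :=
          Real.rpow_le_rpow (by positivity) hbase (by positivity)
      _ = (c / 2) ^ (x * (1 / x)) := by rw [← Real.rpow_mul hc2.le]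
      _ = c / 2 := by rw [mul_one_div_cancel hx0.ne', Real.rpow_one]
  have e2' : Real.Gamma ((1:ℝ) + 1) = 1 := by
    rw [show (1:ℝ) + 1 = 2 by norm_num, Real.Gamma_two]
  have e3' : Real.Gamma (2 * (1:ℝ) + 1) = 2 := by
    rw [show 2 * (1:ℝ) + 1 = 3 by norm_num, Gamma_3]
  have part2 : (c * Real.Gamma ((1 : ℝ) + 1) ^ 2 / Real.Gamma (2 * (1 : ℝ) + 1))
      ^ (1 / (1 : ℝ)) = c / 2 := by
    rw [e2', e3', show (1:ℝ) / 1 = 1 by norm_num, Real.rpow_one]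
    ring
  refine ⟨part1, part2, fun _ => ?_⟩
  constructor
  · haveI : Nonempty {x : ℝ // 1 ≤ x} := ⟨⟨1, le_rfl⟩⟩
    refine le_antisymm (ciSup_le fun x => part1 x x.2) ?_
    have hb : BddAbove (Set.range fun x : {x : ℝ // 1 ≤ x} =>
        (c * Real.Gamma ((x : ℝ) + 1) ^ 2 / Real.Gamma (2 * (x : ℝ) + 1)) ^ (1 / (x : ℝ))) := by
      refine ⟨c / 2, ?_⟩
      rintro _ ⟨x, rfl⟩
      exact part1 x x.2
    have := le_ciSup hb (⟨1, le_rfl⟩ : {x : ℝ // 1 ≤ x})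
    calc c / 2
        = (c * Real.Gamma (((⟨1, le_rfl⟩ : {x : ℝ // 1 ≤ x}) : ℝ) + 1) ^ 2
            / Real.Gamma (2 * ((⟨1, le_rfl⟩ : {x : ℝ // 1 ≤ x}) : ℝ) + 1))
            ^ (1 / ((⟨1, le_rfl⟩ : {x : ℝ // 1 ≤ x}) : ℝ)) := part2.symm
      _ ≤ _ := this
  · haveI : Nonempty {k : ℕ // 1 ≤ k} := ⟨⟨1, le_rfl⟩⟩
    have hkey : ∀ k : ℕ, 1 ≤ k →
        (c * ((k.factorial : ℝ)) ^ 2 / (((2 * k).factorial : ℝ))) ^ (1 / (k : ℝ)) ≤ c / 2 := by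
      intro k hk
      have h1 : Real.Gamma ((k : ℝ) + 1) = k.factorial := Real.Gamma_nat_eq_factorial k
      have h2 : Real.Gamma (2 * (k : ℝ) + 1) = (2 * k).factorial := by
        rw [show 2 * (k:ℝ) + 1 = ((2 * k : ℕ) : ℝ) + 1 by push_cast; ring,
          Real.Gamma_nat_eq_factorial]
      have := part1 (k : ℝ) (by exact_mod_cast hk)
      rwa [h1, h2] at this
    have hval : (c * (((1:ℕ).factorial : ℝ)) ^ 2 / (((2 * 1).factorial : ℝ)))
        ^ (1 / ((1:ℕ) : ℝ)) = c / 2 := by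
      norm_num [Nat.factorial]
    refine le_antisymm (ciSup_le fun k => hkey k k.2) ?_
    have hb : BddAbove (Set.range fun k : {k : ℕ // 1 ≤ k} =>
        (c * (((k : ℕ).factorial : ℝ)) ^ 2 / (((2 * (k : ℕ)).factorial : ℝ)))
          ^ (1 / ((k : ℕ) : ℝ))) := by
      refine ⟨c / 2, ?_⟩
      rintro _ ⟨k, rfl⟩
      exact hkey k k.2
    have := le_ciSup hb (⟨1, le_rfl⟩ : {k : ℕ // 1 ≤ k})
    calc c / 2
        = (c * ((((⟨1, le_rfl⟩ : {k : ℕ // 1 ≤ k}) : ℕ).factorial : ℝ)) ^ 2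
            / (((2 * ((⟨1, le_rfl⟩ : {k : ℕ // 1 ≤ k}) : ℕ)).factorial : ℝ)))
            ^ (1 / (((⟨1, le_rfl⟩ : {k : ℕ // 1 ≤ k}) : ℕ) : ℝ)) := hval.symm
      _ ≤ _ := this
end
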